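/- The Angenent oval evolves by curve shortening flow in the level-set sense: let F(x,y,t) := cos x − e^t cosh y. Then at every (x,y,t) with t < 0 and F(x,y,t) = 0 one has ∂_t F · ((∂_x F)² + (∂_y F)²) = (∂_y F)² ∂²_x F − 2 (∂_x F)(∂_y F) ∂_x∂_y F + (∂_x F)² ∂²_y F. (Note that (∂_x F, ∂_y F) ≠ (0,0) at every point of the zero level set when t < 0.) -/
import Mathlib


open Real

/-- The level-set function of the paperclip: `F(x,y,t) := cos x − e^t cosh y`. -/
noncomputable def paperclipF (x y t : ℝ) : ℝ := Real.cos x - Real.exp t * Real.cosh y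

lemma paperclip_dx (x y t : ℝ) :
    deriv (fun x' => paperclipF x' y t) x = -Real.sin x := by
  unfold paperclipF
  exact ((Real.hasDerivAt_cos x).sub_const (Real.exp t * Real.cosh y)).deriv

lemma paperclip_dy (x y t : ℝ) :
    deriv (fun y' => paperclipF x y' t) y = -(Real.exp t * Real.sinh y) := by
  unfold paperclipF
  have h : HasDerivAt (fun y' => Real.cos x - Real.exp t * Real.cosh y')
      (-(Real.exp t * Real.sinh y)) y :=
    ((Real.hasDerivAt_cosh y).const_mul (Real.exp t)).const_sub (Real.cos x)
  exact h.deriv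

lemma paperclip_dt (x y t : ℝ) :
    deriv (fun t' => paperclipF x y t') t = -(Real.exp t * Real.cosh y) := by
  unfold paperclipF
  have h : HasDerivAt (fun t' => Real.cos x - Real.exp t' * Real.cosh y)
      (-(Real.exp t * Real.cosh y)) t :=
    ((Real.hasDerivAt_exp t).mul_const (Real.cosh y)).const_sub (Real.cos x)
  exact h.deriv

lemma paperclip_dxx (x y t : ℝ) :
    deriv (deriv (fun x' => paperclipF x' y t)) x = -Real.cos x := by
  have h : deriv (fun x' => paperclipF x' y t) = fun x' => -Real.sin x' := by
    funext x'; exact paperclip_dx x' y t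
  rw [h]
  exact ((Real.hasDerivAt_sin x).neg).deriv

lemma paperclip_dyy (x y t : ℝ) :
    deriv (deriv (fun y' => paperclipF x y' t)) y = -(Real.exp t * Real.cosh y) := by
  have h : deriv (fun y' => paperclipF x y' t) = fun y' => -(Real.exp t * Real.sinh y') := by
    funext y'; exact paperclip_dy x y' t
  rw [h]
  have h2 : HasDerivAt (fun y' => -(Real.exp t * Real.sinh y'))
      (-(Real.exp t * Real.cosh y)) y :=
    ((Real.hasDerivAt_sinh y).const_mul (Real.exp t)).neg
  exact h2.deriv

lemma paperclip_dxy (x y t : ℝ) :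
    deriv (fun y' => deriv (fun x' => paperclipF x' y' t) x) y = 0 := by
  have h : (fun y' => deriv (fun x' => paperclipF x' y' t) x) = fun _ => -Real.sin x := by
    funext y'; exact paperclip_dx x y' t
  rw [h]; exact deriv_const y _

/-- The Angenent oval evolves by curve shortening flow in the level-set sense: at every point
of the zero level set of `F(x,y,t) = cos x − e^t cosh y` with `t < 0`, the spatial gradient is
nonzero and `∂_t F · (F_x² + F_y²) = F_y² F_xx − 2 F_x F_y F_xy + F_x² F_yy`. -/
theorem angenent_level_set_flow (x y t : ℝ) (ht : t < 0) (hF : paperclipF x y t = 0) :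
    ((deriv (fun x' => paperclipF x' y t) x, deriv (fun y' => paperclipF x y' t) y) : ℝ × ℝ)
        ≠ (0, 0) ∧
    deriv (fun t' => paperclipF x y t') t *
        ((deriv (fun x' => paperclipF x' y t) x) ^ 2 +
          (deriv (fun y' => paperclipF x y' t) y) ^ 2) =
      (deriv (fun y' => paperclipF x y' t) y) ^ 2 *
          deriv (deriv (fun x' => paperclipF x' y t)) x -
        2 * deriv (fun x' => paperclipF x' y t) x * deriv (fun y' => paperclipF x y' t) y *
          deriv (fun y' => deriv (fun x' => paperclipF x' y' t) x) y +
        (deriv (fun x' => paperclipF x' y t) x) ^ 2 *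
          deriv (deriv (fun y' => paperclipF x y' t)) y := by
  have hc : Real.cos x = Real.exp t * Real.cosh y := by
    unfold paperclipF at hF; linarith
  rw [paperclip_dx, paperclip_dy, paperclip_dt, paperclip_dxx, paperclip_dyy, paperclip_dxy]
  constructor
  · intro h
    rw [Prod.mk.injEq] at h
    have hs : Real.sin x = 0 := by linarith [h.1]
    have hsy : Real.sinh y = 0 := by
      have : Real.exp t * Real.sinh y = 0 := by linarith [h.2]
      have he : Real.exp t ≠ 0 := (Real.exp_pos t).ne'
      rcases mul_eq_zero.mp this with h' | h'
      · exact absurd h' he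
      · exact h'
    have hy0 : y = 0 := Real.sinh_eq_zero.mp hsy
    have : Real.cos x = Real.exp t := by rw [hc, hy0, Real.cosh_zero, mul_one]
    have h1 : Real.exp t < 1 := Real.exp_lt_one_iff.mpr ht
    have h2 : (0:ℝ) < Real.exp t := Real.exp_pos t
    nlinarith [Real.sin_sq_add_cos_sq x]
  · rw [hc]; ring
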